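/- arXiv:1703.06559 — 3 statements merged into one kernel-verified Lean document; each statement's English description precedes it below -/
import Mathlib

section
/- If a sequence of random vectors (T_n, D_n) in ℝ^d × ℝ^m converges in distribution to (Z_T, Z_D), A is an m' × m matrix and a_n → a in ℝ^{m'}, and the limiting law satisfies P(A Z_D ≤ a) > 0 with P(A Z_D = a coordinate-wise boundary) = 0 (the boundary of the polyhedron {A z ≤ a} has limiting probability zero), then the conditional laws of (T_n, D_n) given {A D_n ≤ a_n} converge weakly to the law of (Z_T, Z_D) given {A Z_D ≤ a}. -/
open MeasureTheory Filter BoundedContinuousFunction Topology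

namespace CondWeakConvAux

noncomputable def cut (c₁ c₂ t : ℝ) : ℝ := min 1 (max 0 ((c₂ - t) / (c₂ - c₁)))

lemma cut_continuous (c₁ c₂ : ℝ) : Continuous (cut c₁ c₂) := by
  unfold cut; fun_prop

lemma cut_nonneg (c₁ c₂ t : ℝ) : 0 ≤ cut c₁ c₂ t := le_min zero_le_one (le_max_left _ _)

lemma cut_le_one (c₁ c₂ t : ℝ) : cut c₁ c₂ t ≤ 1 := min_le_left _ _

lemma cut_eq_one {c₁ c₂ t : ℝ} (h : c₁ < c₂) (ht : t ≤ c₁) : cut c₁ c₂ t = 1 := by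
  have h1 : (1:ℝ) ≤ (c₂ - t) / (c₂ - c₁) := (le_div_iff₀ (by linarith)).2 (by linarith)
  have h2 : (1:ℝ) ≤ max 0 ((c₂ - t) / (c₂ - c₁)) := le_max_of_le_right h1
  simp [cut, min_eq_left h2]

lemma cut_eq_zero {c₁ c₂ t : ℝ} (h : c₁ < c₂) (ht : c₂ ≤ t) : cut c₁ c₂ t = 0 := by
  have h1 : (c₂ - t) / (c₂ - c₁) ≤ 0 :=
    div_nonpos_of_nonpos_of_nonneg (by linarith) (by linarith)
  simp [cut, max_eq_left h1]

lemma abs_cut_le_one (c₁ c₂ t : ℝ) : ‖cut c₁ c₂ t‖ ≤ 1 := by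
  rw [Real.norm_eq_abs, abs_le]
  exact ⟨by linarith [cut_nonneg c₁ c₂ t], cut_le_one c₁ c₂ t⟩

lemma integrable_comp {α X : Type*} [MeasurableSpace α] [TopologicalSpace X] [MeasurableSpace X]
    [OpensMeasurableSpace X]
    {μ : Measure α} [IsFiniteMeasure μ] {g : α → X} (hg : Measurable g)
    (F : BoundedContinuousFunction X ℝ) :
    Integrable (fun ω => F (g ω)) μ :=
  ⟨(F.continuous.measurable.comp hg).aestronglyMeasurable,
    HasFiniteIntegral.of_bounded (C := ‖F‖) (ae_of_all _ fun _ => F.norm_coe_le_norm _)⟩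

lemma key {d m m' : ℕ} [Nonempty (Fin m')]
    {Ω : ℕ → Type*} [∀ n, MeasurableSpace (Ω n)]
    (μ : ∀ n, Measure (Ω n)) [∀ n, IsProbabilityMeasure (μ n)]
    (T : ∀ n, Ω n → (Fin d → ℝ)) (D : ∀ n, Ω n → (Fin m → ℝ))
    (hmeas : ∀ n, Measurable fun ω => (T n ω, D n ω))
    (ν : Measure ((Fin d → ℝ) × (Fin m → ℝ))) [IsProbabilityMeasure ν]
    (A : Matrix (Fin m') (Fin m) ℝ) (aseq : ℕ → (Fin m' → ℝ)) (a : Fin m' → ℝ)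
    (ha : Tendsto aseq atTop (nhds a))
    (hweak : ∀ f : BoundedContinuousFunction ((Fin d → ℝ) × (Fin m → ℝ)) ℝ,
      Tendsto (fun n => ∫ ω, f (T n ω, D n ω) ∂(μ n)) atTop (nhds (∫ p, f p ∂ν)))
    (hboundary : ν {p | A.mulVec p.2 ≤ a ∧ ∃ i, A.mulVec p.2 i = a i} = 0)
    (f : BoundedContinuousFunction ((Fin d → ℝ) × (Fin m → ℝ)) ℝ) (hf : ∀ p, 0 ≤ f p) :
    Tendsto (fun n => ∫ ω in {ω | A.mulVec (D n ω) ≤ aseq n}, f (T n ω, D n ω) ∂(μ n))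
      atTop (nhds (∫ p in {p | A.mulVec p.2 ≤ a}, f p ∂ν)) := by
  classical
  -- coordinatewise continuity of the affine map
  have hAcont : ∀ i, Continuous fun v : Fin m → ℝ => A.mulVec v i := by
    intro i
    simp only [Matrix.mulVec, dotProduct]
    exact continuous_finset_sum _ fun j _ => continuous_const.mul (continuous_apply j)
  set ψ : (Fin d → ℝ) × (Fin m → ℝ) → ℝ :=
    fun p => Finset.univ.sup' Finset.univ_nonempty (fun i => A.mulVec p.2 i - a i) with hψdef
  have hψc : Continuous ψ :=
    Continuous.finset_sup'_apply Finset.univ_nonempty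
      (fun i _ => ((hAcont i).comp continuous_snd).sub continuous_const)
  have hψ_le : ∀ (p : (Fin d → ℝ) × (Fin m → ℝ)) (c : ℝ),
      ψ p ≤ c ↔ ∀ i, A.mulVec p.2 i ≤ a i + c := by
    intro p c
    rw [hψdef]
    rw [Finset.sup'_le_iff]
    constructor
    · intro h i; have := h i (Finset.mem_univ i); linarith
    · intro h i _; have := h i; linarith
  have hSeqS : {p : (Fin d → ℝ) × (Fin m → ℝ) | A.mulVec p.2 ≤ a} = {p | ψ p ≤ 0} := by
    ext p
    simp only [Set.mem_setOf_eq, hψ_le, Pi.le_def]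
    constructor <;> intro h i <;> have := h i <;> linarith
  have hbdset : {p : (Fin d → ℝ) × (Fin m → ℝ) | ψ p = 0}
      = {p | A.mulVec p.2 ≤ a ∧ ∃ i, A.mulVec p.2 i = a i} := by
    ext p
    simp only [Set.mem_setOf_eq]
    constructor
    · intro h
      refine ⟨?_, ?_⟩
      · intro i
        have h1 : A.mulVec p.2 i - a i ≤ ψ p :=
          Finset.le_sup' (fun i => A.mulVec p.2 i - a i) (Finset.mem_univ i)
        rw [h] at h1; linarith
      · obtain ⟨i, _, hi⟩ := Finset.exists_mem_eq_sup' (Finset.univ_nonempty)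
          (fun i => A.mulVec p.2 i - a i)
        refine ⟨i, ?_⟩
        have : ψ p = A.mulVec p.2 i - a i := hi
        rw [h] at this; linarith
    · rintro ⟨hle, i, hi⟩
      have h1 : A.mulVec p.2 i - a i ≤ ψ p :=
        Finset.le_sup' (fun i => A.mulVec p.2 i - a i) (Finset.mem_univ i)
      have h2 : ψ p ≤ 0 := by
        apply Finset.sup'_le
        intro j _
        have := hle j; linarith
      have h3 : A.mulVec p.2 i - a i = 0 := by rw [hi]; ring
      linarith
  have hzero : ν {p | ψ p = 0} = 0 := by rw [hbdset]; exact hboundary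
  have hmψ : ∀ c : ℝ, MeasurableSet {p : (Fin d → ℝ) × (Fin m → ℝ) | ψ p ≤ c} :=
    fun c => measurableSet_le hψc.measurable measurable_const
  have hmS : ∀ c : Fin m' → ℝ,
      MeasurableSet {p : (Fin d → ℝ) × (Fin m → ℝ) | A.mulVec p.2 ≤ c} := by
    intro c
    have h : {p : (Fin d → ℝ) × (Fin m → ℝ) | A.mulVec p.2 ≤ c}
        = ⋂ i, {p | A.mulVec p.2 i ≤ c i} := by
      ext p; simp [Pi.le_def, Set.mem_iInter]
    rw [h]
    exact MeasurableSet.iInter fun i =>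
      measurableSet_le ((hAcont i).comp continuous_snd).measurable measurable_const
  have hmE : ∀ n, MeasurableSet {ω : Ω n | A.mulVec (D n ω) ≤ aseq n} := by
    intro n
    have h : {ω : Ω n | A.mulVec (D n ω) ≤ aseq n}
        = (fun ω => (T n ω, D n ω)) ⁻¹' {p | A.mulVec p.2 ≤ aseq n} := rfl
    rw [h]; exact (hmeas n) (hmS _)
  have hfint : Integrable (fun p => f p) ν := integrable_comp measurable_id f
  rw [hSeqS]
  rw [Metric.tendsto_nhds]
  intro δ hδ
  set L : ℝ := ∫ p in {p | ψ p ≤ 0}, f p ∂ν with hLdef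
  -- shrinking annuli around the boundary
  set Dk : ℕ → Set ((Fin d → ℝ) × (Fin m → ℝ)) :=
    fun k => {p | ψ p ≤ 2/((k:ℝ)+1)} \ {p | ψ p ≤ -(2/((k:ℝ)+1))} with hDkdef
  have h2to0 : Tendsto (fun k : ℕ => 2/((k:ℝ)+1)) atTop (nhds 0) := by
    have h := tendsto_one_div_add_atTop_nhds_zero_nat (𝕜 := ℝ)
    have h2 := h.const_mul (2:ℝ)
    simpa [div_eq_mul_inv, mul_comm, mul_assoc] using h2
  have hanti : Antitone Dk := by
    intro k l hkl
    have hle : (2:ℝ)/((l:ℝ)+1) ≤ 2/((k:ℝ)+1) := by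
      apply div_le_div_of_nonneg_left (by norm_num) (by positivity)
      exact_mod_cast Nat.succ_le_succ hkl
    rintro p ⟨h1p, h2p⟩
    refine ⟨le_trans h1p hle, fun hc => h2p (le_trans hc (neg_le_neg hle))⟩
  have hInter : (⋂ k, Dk k) = {p | ψ p = 0} := by
    ext p
    simp only [Set.mem_iInter, hDkdef, Set.mem_diff, Set.mem_setOf_eq]
    constructor
    · intro h
      have hub : ψ p ≤ 0 := ge_of_tendsto' h2to0 (fun k => (h k).1)
      have hlbt : Tendsto (fun k : ℕ => -(2/((k:ℝ)+1))) atTop (nhds 0) := by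
        simpa using h2to0.neg
      have hlb : 0 ≤ ψ p := le_of_tendsto' hlbt (fun k => le_of_lt (lt_of_not_ge (h k).2))
      linarith
    · intro h k
      constructor
      · rw [h]; positivity
      · rw [h]; intro hc
        have : (0:ℝ) < 2/((k:ℝ)+1) := by positivity
        linarith
  have hmeasDk : Tendsto (fun k => ν (Dk k)) atTop (nhds 0) := by
    have h := tendsto_measure_iInter_atTop (μ := ν)
      (fun k => ((hmψ _).diff (hmψ _)).nullMeasurableSet) hanti ⟨0, measure_ne_top ν _⟩
    rw [hInter, hzero] at h
    exact h
  have hmeasDkR : Tendsto (fun k => (‖f‖+1) * (ν (Dk k)).toReal) atTop (nhds 0) := by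
    have h1 : Tendsto (fun k => (ν (Dk k)).toReal) atTop (nhds 0) := by
      have := (ENNReal.tendsto_toReal (by simp)).comp hmeasDk
      simpa [Function.comp_def] using this
    simpa using h1.const_mul (‖f‖+1)
  obtain ⟨k, hk⟩ := (hmeasDkR.eventually (gt_mem_nhds (by linarith : (0:ℝ) < δ/3))).exists
  set ε : ℝ := 1/((k:ℝ)+1) with hεdef
  have hε : 0 < ε := by positivity
  have h2ε : 2*ε = 2/((k:ℝ)+1) := by rw [hεdef]; ring
  -- bound on integrals over subsets of the annulus
  have hbound : ∀ s : Set ((Fin d → ℝ) × (Fin m → ℝ)), s ⊆ Dk k →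
      |∫ p in s, f p ∂ν| ≤ (‖f‖+1) * (ν (Dk k)).toReal := by
    intro s hsub
    have h1 : ‖∫ p in s, f p ∂ν‖ ≤ ‖f‖ * (ν s).toReal :=
      norm_setIntegral_le_of_norm_le_const (measure_lt_top ν s)
        (fun x _ => f.norm_coe_le_norm x)
    rw [Real.norm_eq_abs] at h1
    refine le_trans h1 (mul_le_mul (by linarith [norm_nonneg f])
      (ENNReal.toReal_mono (measure_ne_top ν _) (measure_mono hsub))
      ENNReal.toReal_nonneg (by positivity))
  have hL_lower : L - δ/3 ≤ ∫ p in {p | ψ p ≤ -(2*ε)}, f p ∂ν := by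
    have h2e : -(2*ε) ≤ 0 := neg_nonpos_of_nonneg (by positivity)
    have hsub1 : {p : (Fin d → ℝ) × (Fin m → ℝ) | ψ p ≤ -(2*ε)} ⊆ {p | ψ p ≤ 0} :=
      fun p hp => le_trans hp h2e
    have hdiff := integral_diff (μ := ν) (hmψ (-(2*ε))) hfint.integrableOn hsub1
    have hsubD : {p : (Fin d → ℝ) × (Fin m → ℝ) | ψ p ≤ 0} \ {p | ψ p ≤ -(2*ε)} ⊆ Dk k := by
      rintro p ⟨h1p, h2p⟩
      simp only [hDkdef, Set.mem_diff, Set.mem_setOf_eq] at *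
      rw [← h2ε]
      refine ⟨by linarith, h2p⟩
    have habs := hbound _ hsubD
    rw [hdiff] at habs
    have h2 := abs_le.mp habs
    have := h2.2
    simp only [← hLdef] at this
    linarith
  have hL_upper : (∫ p in {p | ψ p ≤ 2*ε}, f p ∂ν) ≤ L + δ/3 := by
    have h2e : (0:ℝ) ≤ 2*ε := by positivity
    have hsub1 : {p : (Fin d → ℝ) × (Fin m → ℝ) | ψ p ≤ 0} ⊆ {p | ψ p ≤ 2*ε} :=
      fun p hp => le_trans hp h2e
    have hdiff := integral_diff (μ := ν) (hmψ 0) hfint.integrableOn hsub1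
    have hsubD : {p : (Fin d → ℝ) × (Fin m → ℝ) | ψ p ≤ 2*ε} \ {p | ψ p ≤ 0} ⊆ Dk k := by
      rintro p ⟨h1p, h2p⟩
      simp only [hDkdef, Set.mem_diff, Set.mem_setOf_eq] at *
      rw [← h2ε]
      exact ⟨h1p, fun hc => h2p (by linarith)⟩
    have habs := hbound _ hsubD
    rw [hdiff] at habs
    have h2 := abs_le.mp habs
    have := h2.2
    simp only [← hLdef] at this
    linarith
  -- the two bounded continuous sandwich functions
  have hGc : Continuous fun p => f p * cut (-(2*ε)) (-ε) (ψ p) :=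
    f.continuous.mul ((cut_continuous _ _).comp hψc)
  have hHc : Continuous fun p => f p * cut ε (2*ε) (ψ p) :=
    f.continuous.mul ((cut_continuous _ _).comp hψc)
  set G : BoundedContinuousFunction ((Fin d → ℝ) × (Fin m → ℝ)) ℝ :=
    BoundedContinuousFunction.ofNormedAddCommGroup _ hGc ‖f‖ (fun p => by
      rw [norm_mul]
      calc ‖f p‖ * ‖cut (-(2*ε)) (-ε) (ψ p)‖ ≤ ‖f‖ * 1 :=
            mul_le_mul (f.norm_coe_le_norm p) (abs_cut_le_one _ _ _)
              (norm_nonneg _) (norm_nonneg _)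
        _ = ‖f‖ := mul_one _) with hGdef
  set H : BoundedContinuousFunction ((Fin d → ℝ) × (Fin m → ℝ)) ℝ :=
    BoundedContinuousFunction.ofNormedAddCommGroup _ hHc ‖f‖ (fun p => by
      rw [norm_mul]
      calc ‖f p‖ * ‖cut ε (2*ε) (ψ p)‖ ≤ ‖f‖ * 1 :=
            mul_le_mul (f.norm_coe_le_norm p) (abs_cut_le_one _ _ _)
              (norm_nonneg _) (norm_nonneg _)
        _ = ‖f‖ := mul_one _) with hHdef
  have hGcoe : ∀ p, G p = f p * cut (-(2*ε)) (-ε) (ψ p) := fun p => rfl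
  have hHcoe : ∀ p, H p = f p * cut ε (2*ε) (ψ p) := fun p => rfl
  have hGν : ∫ p in {p | ψ p ≤ -(2*ε)}, f p ∂ν ≤ ∫ p, G p ∂ν := by
    rw [← integral_indicator (hmψ _)]
    refine integral_mono (hfint.indicator (hmψ _))
      (integrable_comp measurable_id G : Integrable (fun p => G p) ν) ?_
    intro p
    by_cases hp : p ∈ {p : (Fin d → ℝ) × (Fin m → ℝ) | ψ p ≤ -(2*ε)}
    · have hp' : ψ p ≤ -(2*ε) := hp
      rw [Set.indicator_of_mem hp, hGcoe, cut_eq_one (by linarith) hp', mul_one]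
    · rw [Set.indicator_of_notMem hp, hGcoe]
      exact mul_nonneg (hf p) (cut_nonneg _ _ _)
  have hHν : ∫ p, H p ∂ν ≤ ∫ p in {p | ψ p ≤ 2*ε}, f p ∂ν := by
    rw [← integral_indicator (hmψ _)]
    refine integral_mono (integrable_comp measurable_id H : Integrable (fun p => H p) ν)
      (hfint.indicator (hmψ _)) ?_
    intro p
    by_cases hp : p ∈ {p : (Fin d → ℝ) × (Fin m → ℝ) | ψ p ≤ 2*ε}
    · rw [Set.indicator_of_mem hp, hHcoe]
      exact mul_le_of_le_one_right (hf p) (cut_le_one _ _ _)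
    · have hp' : 2*ε ≤ ψ p := le_of_lt (lt_of_not_ge hp)
      rw [Set.indicator_of_notMem hp, hHcoe, cut_eq_zero (by linarith) hp', mul_zero]
  have haev : ∀ᶠ n in atTop, ∀ i, |aseq n i - a i| < ε := by
    rw [eventually_all]
    intro i
    have hi : Tendsto (fun n => aseq n i) atTop (nhds (a i)) := tendsto_pi_nhds.mp ha i
    have h2 := Metric.tendsto_nhds.mp hi ε hε
    simpa [Real.dist_eq] using h2
  filter_upwards [haev, Metric.tendsto_nhds.mp (hweak G) (δ/3) (by linarith),
    Metric.tendsto_nhds.mp (hweak H) (δ/3) (by linarith)] with n han hGn hHn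
  have hEind : ∫ ω in {ω | A.mulVec (D n ω) ≤ aseq n}, f (T n ω, D n ω) ∂(μ n)
      = ∫ ω, Set.indicator {ω | A.mulVec (D n ω) ≤ aseq n}
          (fun ω => f (T n ω, D n ω)) ω ∂(μ n) :=
    (integral_indicator (hmE n)).symm
  have hlow : ∀ ω, G (T n ω, D n ω) ≤ Set.indicator {ω | A.mulVec (D n ω) ≤ aseq n}
      (fun ω => f (T n ω, D n ω)) ω := by
    intro ω
    by_cases hω : ω ∈ {ω : Ω n | A.mulVec (D n ω) ≤ aseq n}
    · rw [Set.indicator_of_mem hω, hGcoe]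
      exact mul_le_of_le_one_right (hf _) (cut_le_one _ _ _)
    · rw [Set.indicator_of_notMem hω, hGcoe]
      have hψω : -ε ≤ ψ (T n ω, D n ω) := by
        by_contra hc
        push_neg at hc
        apply hω
        intro i
        have h1 : A.mulVec (D n ω) i - a i ≤ ψ (T n ω, D n ω) :=
          Finset.le_sup' (fun i => A.mulVec (D n ω) i - a i) (Finset.mem_univ i)
        have h2 := abs_lt.mp (han i)
        linarith [h2.1]
      rw [cut_eq_zero (by linarith) hψω, mul_zero]
  have hup : ∀ ω, Set.indicator {ω | A.mulVec (D n ω) ≤ aseq n}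
      (fun ω => f (T n ω, D n ω)) ω ≤ H (T n ω, D n ω) := by
    intro ω
    by_cases hω : ω ∈ {ω : Ω n | A.mulVec (D n ω) ≤ aseq n}
    · rw [Set.indicator_of_mem hω, hHcoe]
      have hψω : ψ (T n ω, D n ω) ≤ ε := by
        rw [hψ_le]
        intro i
        have h2 := abs_lt.mp (han i)
        have h3 : A.mulVec (D n ω) i ≤ aseq n i := hω i
        linarith [h2.2]
      rw [cut_eq_one (by linarith) hψω, mul_one]
    · rw [Set.indicator_of_notMem hω, hHcoe]
      exact mul_nonneg (hf _) (cut_nonneg _ _ _)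
  have hGint := integrable_comp (μ := μ n) (hmeas n) G
  have hHint := integrable_comp (μ := μ n) (hmeas n) H
  have hfind := (integrable_comp (μ := μ n) (hmeas n) f).indicator (hmE n)
  have h1 : (∫ ω, G (T n ω, D n ω) ∂(μ n))
      ≤ ∫ ω in {ω | A.mulVec (D n ω) ≤ aseq n}, f (T n ω, D n ω) ∂(μ n) := by
    rw [hEind]; exact integral_mono hGint hfind hlow
  have h2 : (∫ ω in {ω | A.mulVec (D n ω) ≤ aseq n}, f (T n ω, D n ω) ∂(μ n))
      ≤ ∫ ω, H (T n ω, D n ω) ∂(μ n) := by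
    rw [hEind]; exact integral_mono hfind hHint hup
  rw [Real.dist_eq] at hGn hHn ⊢
  have hG1 := abs_lt.mp hGn
  have hH1 := abs_lt.mp hHn
  rw [abs_lt]
  constructor
  · linarith [hGν, hL_lower, h1, hG1.1]
  · linarith [hHν, hL_upper, h2, hH1.2]

end CondWeakConvAux

open CondWeakConvAux in
/-- Conditional weak convergence for affine selection events: if `(T n, D n)` converges in
distribution to a limit law `ν`, `a n → a`, the limiting polyhedron `{A z ≤ a}` has positive
probability and its boundary has probability zero, then the conditional laws of `(T n, D n)`
given `{A (D n) ≤ a n}` converge weakly to `ν` conditioned on `{A z ≤ a}`. -/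
theorem conditional_weak_convergence_affine
    {d m m' : ℕ}
    {Ω : ℕ → Type*} [∀ n, MeasurableSpace (Ω n)]
    (μ : ∀ n, Measure (Ω n)) [∀ n, IsProbabilityMeasure (μ n)]
    (T : ∀ n, Ω n → (Fin d → ℝ)) (D : ∀ n, Ω n → (Fin m → ℝ))
    (hmeas : ∀ n, Measurable fun ω => (T n ω, D n ω))
    (ν : Measure ((Fin d → ℝ) × (Fin m → ℝ))) [IsProbabilityMeasure ν]
    (A : Matrix (Fin m') (Fin m) ℝ) (aseq : ℕ → (Fin m' → ℝ)) (a : Fin m' → ℝ)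
    (ha : Tendsto aseq atTop (nhds a))
    (hweak : ∀ f : BoundedContinuousFunction ((Fin d → ℝ) × (Fin m → ℝ)) ℝ,
      Tendsto (fun n => ∫ ω, f (T n ω, D n ω) ∂(μ n)) atTop (nhds (∫ p, f p ∂ν)))
    (hpos : 0 < ν {p | A.mulVec p.2 ≤ a})
    (hboundary : ν {p | A.mulVec p.2 ≤ a ∧ ∃ i, A.mulVec p.2 i = a i} = 0) :
    ∀ f : BoundedContinuousFunction ((Fin d → ℝ) × (Fin m → ℝ)) ℝ,
      Tendsto
        (fun n =>
          (∫ ω in {ω | A.mulVec (D n ω) ≤ aseq n}, f (T n ω, D n ω) ∂(μ n))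
            / (μ n {ω | A.mulVec (D n ω) ≤ aseq n}).toReal)
        atTop
        (nhds ((∫ p in {p | A.mulVec p.2 ≤ a}, f p ∂ν) / (ν {p | A.mulVec p.2 ≤ a}).toReal)) := by
  intro f
  rcases isEmpty_or_nonempty (Fin m') with he | hne
  · -- no constraints: the selection event is everything
    have hset : ∀ c : Fin m' → ℝ,
        {p : (Fin d → ℝ) × (Fin m → ℝ) | A.mulVec p.2 ≤ c} = Set.univ := by
      intro c; ext p
      simp [Pi.le_def]
    have hsetΩ : ∀ n, {ω : Ω n | A.mulVec (D n ω) ≤ aseq n} = Set.univ := by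
      intro n; ext ω
      simp [Pi.le_def]
    simp only [hset a, hsetΩ, Measure.restrict_univ, measure_univ, ENNReal.toReal_one, div_one,
      setIntegral_univ]
    exact hweak f
  · -- main case
    have hmE : ∀ n, MeasurableSet {ω : Ω n | A.mulVec (D n ω) ≤ aseq n} := by
      intro n
      have hAcont : ∀ i, Continuous fun v : Fin m → ℝ => A.mulVec v i := by
        intro i
        simp only [Matrix.mulVec, dotProduct]
        exact continuous_finset_sum _ fun j _ => continuous_const.mul (continuous_apply j)
      have h : {ω : Ω n | A.mulVec (D n ω) ≤ aseq n}
          = (fun ω => (T n ω, D n ω)) ⁻¹' {p | A.mulVec p.2 ≤ aseq n} := rfl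
      rw [h]
      refine (hmeas n) ?_
      have h2 : {p : (Fin d → ℝ) × (Fin m → ℝ) | A.mulVec p.2 ≤ aseq n}
          = ⋂ i, {p | A.mulVec p.2 i ≤ aseq n i} := by
        ext p; simp [Pi.le_def, Set.mem_iInter]
      rw [h2]
      exact MeasurableSet.iInter fun i =>
        measurableSet_le ((hAcont i).comp continuous_snd).measurable measurable_const
    set S : Set ((Fin d → ℝ) × (Fin m → ℝ)) := {p | A.mulVec p.2 ≤ a} with hSdef
    -- denominator convergence, from the key lemma applied to the constant 1
    have hone := key μ T D hmeas ν A aseq a ha hweak hboundary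
      (BoundedContinuousFunction.const _ (1:ℝ)) (fun p => zero_le_one)
    have hden : Tendsto (fun n => (μ n {ω | A.mulVec (D n ω) ≤ aseq n}).toReal)
        atTop (nhds ((ν S).toReal)) := by
      have heq : ∀ n, (∫ ω in {ω | A.mulVec (D n ω) ≤ aseq n},
          (BoundedContinuousFunction.const ((Fin d → ℝ) × (Fin m → ℝ)) (1:ℝ)) (T n ω, D n ω)
            ∂(μ n)) = (μ n {ω | A.mulVec (D n ω) ≤ aseq n}).toReal := by
        intro n
        simp [setIntegral_const]; rfl
      have heq2 : (∫ p in S, (BoundedContinuousFunction.const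
          ((Fin d → ℝ) × (Fin m → ℝ)) (1:ℝ)) p ∂ν) = (ν S).toReal := by
        simp [setIntegral_const]; rfl
      rw [← heq2]
      exact hone.congr heq
    -- numerator convergence
    have hnonneg : ∀ p, 0 ≤ (f + BoundedContinuousFunction.const ((Fin d → ℝ) × (Fin m → ℝ)) ‖f‖) p := by
      intro p
      have h1 : ‖f p‖ ≤ ‖f‖ := f.norm_coe_le_norm p
      rw [Real.norm_eq_abs, abs_le] at h1
      simp only [BoundedContinuousFunction.coe_add, BoundedContinuousFunction.const_apply,
        Pi.add_apply]
      linarith [h1.1]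
    have hplus := key μ T D hmeas ν A aseq a ha hweak hboundary
      (f + BoundedContinuousFunction.const ((Fin d → ℝ) × (Fin m → ℝ)) ‖f‖) hnonneg
    have hfn : ∀ n, ∫ ω in {ω | A.mulVec (D n ω) ≤ aseq n}, f (T n ω, D n ω) ∂(μ n)
        = (∫ ω in {ω | A.mulVec (D n ω) ≤ aseq n},
            (f + BoundedContinuousFunction.const ((Fin d → ℝ) × (Fin m → ℝ)) ‖f‖) (T n ω, D n ω) ∂(μ n))
          - ‖f‖ * (μ n {ω | A.mulVec (D n ω) ≤ aseq n}).toReal := by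
      intro n
      have hc : ∀ ω : Ω n, (f + BoundedContinuousFunction.const
          ((Fin d → ℝ) × (Fin m → ℝ)) ‖f‖) (T n ω, D n ω) = f (T n ω, D n ω) + ‖f‖ := by
        intro ω
        simp
      rw [show (∫ ω in {ω | A.mulVec (D n ω) ≤ aseq n},
            (f + BoundedContinuousFunction.const ((Fin d → ℝ) × (Fin m → ℝ)) ‖f‖) (T n ω, D n ω) ∂(μ n))
          = ∫ ω in {ω | A.mulVec (D n ω) ≤ aseq n}, (f (T n ω, D n ω) + ‖f‖) ∂(μ n) from
        setIntegral_congr_fun (hmE n) (fun ω _ => hc ω)]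
      rw [integral_add ((integrable_comp (μ := μ n) (hmeas n) f).integrableOn)
        (integrableOn_const (measure_ne_top _ _))]
      rw [setIntegral_const]
      simp [smul_eq_mul, mul_comm, Measure.real]
    have hflim : (∫ p in S, f p ∂ν)
        = (∫ p in S, (f + BoundedContinuousFunction.const ((Fin d → ℝ) × (Fin m → ℝ)) ‖f‖) p ∂ν)
          - ‖f‖ * (ν S).toReal := by
      have hc : ∀ p ∈ S, (f + BoundedContinuousFunction.const
          ((Fin d → ℝ) × (Fin m → ℝ)) ‖f‖) p = f p + ‖f‖ := by
        intro p _; simp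
      have hmSa : MeasurableSet S := by
        have hAcont : ∀ i, Continuous fun v : Fin m → ℝ => A.mulVec v i := by
          intro i
          simp only [Matrix.mulVec, dotProduct]
          exact continuous_finset_sum _ fun j _ => continuous_const.mul (continuous_apply j)
        have h2 : S = ⋂ i, {p : (Fin d → ℝ) × (Fin m → ℝ) | A.mulVec p.2 i ≤ a i} := by
          rw [hSdef]; ext p; simp [Pi.le_def, Set.mem_iInter]
        rw [h2]
        exact MeasurableSet.iInter fun i =>
          measurableSet_le ((hAcont i).comp continuous_snd).measurable measurable_const
      rw [setIntegral_congr_fun hmSa hc]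
      have hfint : Integrable (fun p : (Fin d → ℝ) × (Fin m → ℝ) => f p) ν :=
        ⟨f.continuous.measurable.aestronglyMeasurable,
          HasFiniteIntegral.of_bounded (C := ‖f‖) (ae_of_all _ fun p => f.norm_coe_le_norm p)⟩
      rw [integral_add (hfint.integrableOn)
        (integrableOn_const (measure_ne_top _ _))]
      rw [setIntegral_const]
      simp [smul_eq_mul, mul_comm, Measure.real]
    have hnum : Tendsto (fun n => ∫ ω in {ω | A.mulVec (D n ω) ≤ aseq n},
        f (T n ω, D n ω) ∂(μ n)) atTop (nhds (∫ p in S, f p ∂ν)) := by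
      have h3 := hplus.sub (hden.const_mul ‖f‖)
      have h4 := h3.congr (fun n => (hfn n).symm)
      rwa [← hflim] at h4
    have hden_ne : (ν S).toReal ≠ 0 :=
      ENNReal.toReal_ne_zero.2 ⟨hpos.ne', measure_ne_top ν _⟩
    exact hnum.div hden hden_ne
end

section
/- Projection onto the min-at-coordinate-1 cone: for z ∈ ℝ^L, the Euclidean projection x* of z onto the closed convex cone C = {x ∈ ℝ^L : x₁ ≤ x_j for all j} satisfies x*_j = max{x*₁, z_j} for j ≥ 2, where x*₁ minimizes the convex function h(t) = (t − z₁)² + Σ_{l=2}^L (t − z_l)² · 1{t ≥ z_l}; moreover the minimizer x*₁ equals the average of z₁ together with all z_l (l ≥ 2) satisfying z_l ≤ x*₁. -/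
open Finset

/-- Euclidean projection onto the cone `{x : x₀ ≤ x_j ∀ j}` (minimum attained at the first
coordinate): the projection `x*` of `z` satisfies `x*_j = max(x*₀, z_j)` for `j ≠ 0`; its
first coordinate minimizes the profiled convex function
`h(t) = (t − z₀)² + ∑_{l ≠ 0} (t − z_l)² 1{t ≥ z_l}`; and `x*₀` equals the average of `z₀`
together with all `z_l` (`l ≠ 0`) with `z_l ≤ x*₀`. -/
theorem projection_min_cone
    {L : ℕ} [NeZero L] (z xstar : Fin L → ℝ)
    (hmem : ∀ j, xstar 0 ≤ xstar j)
    (hproj : ∀ x : Fin L → ℝ, (∀ j, x 0 ≤ x j) →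
      ∑ i, (xstar i - z i) ^ 2 ≤ ∑ i, (x i - z i) ^ 2)
    (h : ℝ → ℝ)
    (hdef : ∀ t, h t = (t - z 0) ^ 2 +
      ∑ l ∈ Finset.univ.erase (0 : Fin L), (if z l ≤ t then (t - z l) ^ 2 else 0)) :
    (∀ j : Fin L, j ≠ 0 → xstar j = max (xstar 0) (z j)) ∧
    (∀ t : ℝ, h (xstar 0) ≤ h t) ∧
    (xstar 0 =
      (z 0 + ∑ l ∈ (Finset.univ.erase (0 : Fin L)).filter (fun l => z l ≤ xstar 0), z l)
        / (1 + ((Finset.univ.erase (0 : Fin L)).filter (fun l => z l ≤ xstar 0)).card)) := by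
  -- Part 1: coordinates j ≠ 0
  have part1 : ∀ j : Fin L, j ≠ 0 → xstar j = max (xstar 0) (z j) := by
    intro j hj
    set m := max (xstar 0) (z j) with hm
    have hfeas : ∀ i, Function.update xstar j m 0 ≤ Function.update xstar j m i := by
      intro i
      rw [Function.update_of_ne (Ne.symm hj)]
      by_cases hij : i = j
      · subst hij; rw [Function.update_self]; exact le_max_left _ _
      · rw [Function.update_of_ne hij]; exact hmem i
    have hkey := hproj _ hfeas
    have hdiff : ∑ i, ((Function.update xstar j m i - z i) ^ 2 - (xstar i - z i) ^ 2)
        = (m - z j) ^ 2 - (xstar j - z j) ^ 2 := by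
      rw [Finset.sum_eq_single j (fun i _ hij => by rw [Function.update_of_ne hij]; ring)
        (fun habs => absurd (Finset.mem_univ j) habs), Function.update_self]
    have h3 : ∑ i, ((Function.update xstar j m i - z i) ^ 2 - (xstar i - z i) ^ 2)
        = ∑ i, (Function.update xstar j m i - z i) ^ 2 - ∑ i, (xstar i - z i) ^ 2 :=
      Finset.sum_sub_distrib _ _
    have hsq : (xstar j - z j) ^ 2 ≤ (m - z j) ^ 2 := by linarith
    have h1 : xstar 0 ≤ xstar j := hmem j
    rcases le_total (z j) (xstar 0) with hc | hc
    · have hmx : m = xstar 0 := max_eq_left hc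
      rw [hmx] at hsq ⊢
      have : xstar j ≤ xstar 0 := by nlinarith
      exact le_antisymm this h1
    · have hmx : m = z j := max_eq_right hc
      rw [hmx] at hsq ⊢
      have h0 : xstar j - z j = 0 := by
        have h2 : (xstar j - z j) ^ 2 = 0 := le_antisymm (by nlinarith) (sq_nonneg _)
        exact pow_eq_zero_iff two_ne_zero |>.mp h2
      linarith
  -- h expressed as a filtered sum
  have hform : ∀ s : ℝ, h s = (s - z 0) ^ 2 +
      ∑ l ∈ (Finset.univ.erase (0 : Fin L)).filter (fun l => z l ≤ s), (s - z l) ^ 2 := by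
    intro s; rw [hdef s, Finset.sum_filter]
  -- h s is the squared distance of the feasible point (s, max(s, z l))
  have hgen : ∀ s : ℝ, ∑ i, ((if i = 0 then s else max s (z i)) - z i) ^ 2 = h s := by
    intro s
    have hsplit : ∑ i, ((if i = 0 then s else max s (z i)) - z i) ^ 2
        = ((if (0 : Fin L) = 0 then s else max s (z 0)) - z 0) ^ 2
          + ∑ i ∈ Finset.univ.erase (0 : Fin L),
              ((if i = 0 then s else max s (z i)) - z i) ^ 2 :=
      (Finset.add_sum_erase _ _ (Finset.mem_univ 0)).symm
    rw [hsplit, hdef s, if_pos rfl]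
    congr 1
    refine Finset.sum_congr rfl fun l hl => ?_
    have hl0 : l ≠ 0 := Finset.ne_of_mem_erase hl
    rw [if_neg hl0]
    by_cases hc : z l ≤ s
    · rw [if_pos hc, max_eq_left hc]
    · rw [if_neg hc, max_eq_right (le_of_not_ge hc)]
      simp
  -- Part 2: xstar 0 minimizes h
  have part2 : ∀ t : ℝ, h (xstar 0) ≤ h t := by
    intro t
    have hx : ∀ i, (if i = 0 then xstar 0 else max (xstar 0) (z i)) = xstar i := by
      intro i; by_cases hi : i = 0
      · simp [hi]
      · rw [if_neg hi, ← part1 i hi]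
    have hfeas : ∀ i : Fin L,
        (fun i => if i = 0 then t else max t (z i)) 0 ≤
        (fun i => if i = 0 then t else max t (z i)) i := by
      intro i
      by_cases hi : i = 0
      · simp [hi]
      · simp only [if_pos rfl, if_neg hi]
        exact le_max_left _ _
    calc h (xstar 0) = ∑ i, (xstar i - z i) ^ 2 := by
          rw [← hgen (xstar 0)]
          exact Finset.sum_congr rfl fun i _ => by rw [hx i]
      _ ≤ ∑ i, ((if i = 0 then t else max t (z i)) - z i) ^ 2 := hproj _ hfeas
      _ = h t := hgen t
  refine ⟨part1, part2, ?_⟩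
  -- Part 3: the averaging formula
  set t0 := xstar 0 with ht0
  set E := Finset.univ.erase (0 : Fin L) with hE
  set S := E.filter (fun l => z l ≤ t0) with hS
  set Sm := E.filter (fun l => z l < t0) with hSm
  set D := (t0 - z 0) + ∑ l ∈ S, (t0 - z l) with hD_def
  have hSmS : Sm ⊆ S := by
    intro l hl
    rw [hSm, Finset.mem_filter] at hl
    rw [hS, Finset.mem_filter]
    exact ⟨hl.1, le_of_lt hl.2⟩
  have hzero : ∀ f : Fin L → ℝ, (∀ l, z l = t0 → f l = 0) →
      ∑ l ∈ Sm, f l = ∑ l ∈ S, f l := by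
    intro f hf
    refine Finset.sum_subset hSmS fun x hx hnx => ?_
    rw [hS, Finset.mem_filter] at hx
    rw [hSm, Finset.mem_filter] at hnx
    push_neg at hnx
    exact hf x (le_antisymm hx.2 (hnx hx.1))
  have hcS : (0:ℝ) < 1 + S.card := by positivity
  have hcSm : (0:ℝ) < 1 + Sm.card := by positivity
  -- D ≥ 0 via rightward perturbations
  have hDge : 0 ≤ D := by
    by_contra hD
    push_neg at hD
    obtain ⟨δ, hδpos, hδ⟩ : ∃ δ > (0:ℝ), ∀ l ∈ E, t0 < z l → δ ≤ z l - t0 := by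
      by_cases hne : (E.filter fun l => t0 < z l).Nonempty
      · refine ⟨(E.filter fun l => t0 < z l).inf' hne (fun l => z l - t0), ?_, ?_⟩
        · exact (Finset.lt_inf'_iff hne).mpr fun l hl => by
            rw [Finset.mem_filter] at hl; linarith [hl.2]
        · intro l hl hlt
          exact Finset.inf'_le _ (Finset.mem_filter.mpr ⟨hl, hlt⟩)
      · exact ⟨1, one_pos, fun l hl hlt =>
          absurd ⟨l, Finset.mem_filter.mpr ⟨hl, hlt⟩⟩ hne⟩
    set ε := min (δ / 2) (-D / (1 + S.card)) with hε
    have hεpos : 0 < ε := lt_min (by linarith) (div_pos (by linarith) hcS)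
    have hεδ : ε < δ := lt_of_le_of_lt (min_le_left _ _) (by linarith)
    have hεle : (1 + (S.card : ℝ)) * ε ≤ -D := by
      have h4 : ε ≤ -D / (1 + (S.card : ℝ)) := min_le_right _ _
      rw [mul_comm]
      exact (le_div_iff₀ hcS).mp h4
    have hfilt : E.filter (fun l => z l ≤ t0 + ε) = S := by
      ext l
      rw [hS, Finset.mem_filter, Finset.mem_filter]
      constructor
      · rintro ⟨hl, hle⟩
        refine ⟨hl, ?_⟩
        by_contra hgt
        push_neg at hgt
        have := hδ l hl hgt
        linarith
      · rintro ⟨hl, hle⟩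
        exact ⟨hl, by linarith⟩
    have h1 := hform (t0 + ε)
    rw [hfilt] at h1
    have h2 := hform t0
    rw [← hS] at h2
    have hexp : ∑ l ∈ S, (t0 + ε - z l) ^ 2
        = ∑ l ∈ S, (t0 - z l) ^ 2 + 2 * ε * (∑ l ∈ S, (t0 - z l)) + S.card * ε ^ 2 := by
      rw [Finset.sum_congr rfl
        (fun l _ => by ring : ∀ l ∈ S, (t0 + ε - z l) ^ 2
          = (t0 - z l) ^ 2 + (2 * ε * (t0 - z l) + ε ^ 2)),
        Finset.sum_add_distrib, Finset.sum_add_distrib, ← Finset.mul_sum,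
        Finset.sum_const, nsmul_eq_mul]
      ring
    have hfinal : h (t0 + ε) - h t0 = ε * (2 * D + (1 + S.card) * ε) := by
      rw [h1, h2, hexp, hD_def]; ring
    have hneg : ε * (2 * D + (1 + (S.card : ℝ)) * ε) < 0 :=
      mul_neg_of_pos_of_neg hεpos (by linarith)
    have hle := part2 (t0 + ε)
    linarith
  -- D ≤ 0 via leftward perturbations
  have hDle : D ≤ 0 := by
    by_contra hD
    push_neg at hD
    obtain ⟨δ, hδpos, hδ⟩ : ∃ δ > (0:ℝ), ∀ l ∈ E, z l < t0 → δ ≤ t0 - z l := by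
      by_cases hne : (E.filter fun l => z l < t0).Nonempty
      · refine ⟨(E.filter fun l => z l < t0).inf' hne (fun l => t0 - z l), ?_, ?_⟩
        · exact (Finset.lt_inf'_iff hne).mpr fun l hl => by
            rw [Finset.mem_filter] at hl; linarith [hl.2]
        · intro l hl hlt
          exact Finset.inf'_le _ (Finset.mem_filter.mpr ⟨hl, hlt⟩)
      · exact ⟨1, one_pos, fun l hl hlt =>
          absurd ⟨l, Finset.mem_filter.mpr ⟨hl, hlt⟩⟩ hne⟩
    set ε := min (δ / 2) (D / (1 + Sm.card)) with hε
    have hεpos : 0 < ε := lt_min (by linarith) (div_pos hD hcSm)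
    have hεδ : ε < δ := lt_of_le_of_lt (min_le_left _ _) (by linarith)
    have hεle : (1 + (Sm.card : ℝ)) * ε ≤ D := by
      have h4 : ε ≤ D / (1 + (Sm.card : ℝ)) := min_le_right _ _
      rw [mul_comm]
      exact (le_div_iff₀ hcSm).mp h4
    have hfilt : E.filter (fun l => z l ≤ t0 - ε) = Sm := by
      ext l
      rw [hSm, Finset.mem_filter, Finset.mem_filter]
      constructor
      · rintro ⟨hl, hle⟩
        exact ⟨hl, by linarith⟩
      · rintro ⟨hl, hlt⟩
        have := hδ l hl hlt
        exact ⟨hl, by linarith⟩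
    have h1 := hform (t0 - ε)
    rw [hfilt] at h1
    have h2 := hform t0
    rw [← hS] at h2
    -- rewrite h t0 with Sm
    have hsq_eq : ∑ l ∈ Sm, (t0 - z l) ^ 2 = ∑ l ∈ S, (t0 - z l) ^ 2 :=
      hzero _ (fun l hzl => by simp [hzl])
    have hD_eq : D = (t0 - z 0) + ∑ l ∈ Sm, (t0 - z l) := by
      rw [hD_def, hzero (fun l => t0 - z l) (fun l hzl => by simp [hzl])]
    have hexp : ∑ l ∈ Sm, (t0 - ε - z l) ^ 2
        = ∑ l ∈ Sm, (t0 - z l) ^ 2 - 2 * ε * (∑ l ∈ Sm, (t0 - z l)) + Sm.card * ε ^ 2 := by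
      rw [Finset.sum_congr rfl
        (fun l _ => by ring : ∀ l ∈ Sm, (t0 - ε - z l) ^ 2
          = (t0 - z l) ^ 2 + (-(2 * ε) * (t0 - z l) + ε ^ 2)),
        Finset.sum_add_distrib, Finset.sum_add_distrib, ← Finset.mul_sum,
        Finset.sum_const, nsmul_eq_mul]
      ring
    have hfinal : h (t0 - ε) - h t0 = ε * (-(2 * D) + (1 + Sm.card) * ε) := by
      rw [h1, h2, ← hsq_eq, hexp, hD_eq]; ring
    have hneg : ε * (-(2 * D) + (1 + (Sm.card : ℝ)) * ε) < 0 :=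
      mul_neg_of_pos_of_neg hεpos (by linarith)
    have hle := part2 (t0 - ε)
    linarith
  have hD0 : D = 0 := le_antisymm hDle hDge
  have hsub : ∑ l ∈ S, (t0 - z l) = S.card * t0 - ∑ l ∈ S, z l := by
    rw [Finset.sum_sub_distrib, Finset.sum_const, nsmul_eq_mul]
  have hlin : (t0 - z 0) + ((S.card : ℝ) * t0 - ∑ l ∈ S, z l) = 0 := by
    rw [← hsub, ← hD_def]; exact hD0
  rw [eq_div_iff (ne_of_gt hcS)]
  linear_combination hlin
end

section
/- Quadratic remainder bound: under the assumptions of the test-error theorem, (1/√n₂) ‖X^{test}(β₀ − β̂^{train})‖² → 0 in probability as n₁, n₂ → ∞ with n₂ = Θ(n₁). -/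
open MeasureTheory ProbabilityTheory Filter Matrix

/-- Quadratic remainder bound (step 3 in the proof of the test-error CLT): for i.i.d. data
with `E‖x₁‖² < ∞` and a training-based estimator with `√n₁ ‖β̂ₙ − β₀‖² → 0` in probability,
`n₂⁻¹ᐟ² ‖X^{test}(β₀ − β̂ₙ)‖² → 0` in probability as `n₁, n₂ → ∞` with `n₂ = Θ(n₁)`. -/
theorem test_error_quadratic_remainder_bound
    {p : ℕ} {Ω : Type*} [MeasurableSpace Ω] (μ : Measure Ω) [IsProbabilityMeasure μ]
    (x : ℕ → Ω → (Fin p → ℝ)) (y : ℕ → Ω → ℝ)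
    (hxmeas : ∀ i, Measurable (x i)) (hymeas : ∀ i, Measurable (y i))
    (hindep : iIndepFun (fun i ω => (x i ω, y i ω)) μ)
    (hident : ∀ i : ℕ, IdentDistrib (fun ω => (x i ω, y i ω)) (fun ω => (x 0 ω, y 0 ω)) μ μ)
    (β₀ : Fin p → ℝ)
    -- E‖x₁‖² < ∞
    (hmom : Integrable (fun ω => ∑ j, (x 0 ω j) ^ 2) μ)
    (n₁ n₂ : ℕ → ℕ) (hn₁ : Tendsto n₁ atTop atTop)
    -- n₂ = Θ(n₁)
    (hTheta : ∃ c C : ℝ, 0 < c ∧ 0 < C ∧ ∀ n,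
      c * (n₁ n : ℝ) ≤ (n₂ n : ℝ) ∧ (n₂ n : ℝ) ≤ C * (n₁ n : ℝ))
    (βhat : ℕ → Ω → (Fin p → ℝ)) (hβhatmeas : ∀ n, Measurable (βhat n))
    (hindep_train : ∀ n, IndepFun (βhat n)
      (fun ω => fun i : Fin (n₂ n) => (x i ω, y i ω)) μ)
    -- rate-n₁^{1/4} consistency: √n₁ ‖β̂ₙ − β₀‖² → 0 in probability
    (hconsist : ∀ ε > 0, Tendsto
      (fun n => (μ {ω | ε ≤ Real.sqrt (n₁ n) * ∑ j, (βhat n ω j - β₀ j) ^ 2}).toReal)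
      atTop (nhds 0)) :
    ∀ ε > 0, Tendsto
      (fun n => (μ {ω | ε ≤ (1 / Real.sqrt (n₂ n)) *
        ∑ i ∈ Finset.range (n₂ n), (x i ω ⬝ᵥ (β₀ - βhat n ω)) ^ 2}).toReal)
      atTop (nhds 0) := by
  obtain ⟨c, C, hc, hC, hcC⟩ := hTheta
  intro ε hε
  -- the squared-norm process
  set X : ℕ → Ω → ℝ := fun i ω => ∑ j, (x i ω j) ^ 2 with hXdef
  have hf : Measurable (fun q : (Fin p → ℝ) × ℝ => ∑ j, (q.1 j) ^ 2) := by
    apply Finset.measurable_sum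
    intro j _
    exact ((measurable_pi_apply j).comp measurable_fst).pow_const 2
  have hXmeas : ∀ i, Measurable (X i) := by
    intro i
    apply Finset.measurable_sum
    intro j _
    exact ((measurable_pi_apply j).comp (hxmeas i)).pow_const 2
  have hpair : Pairwise (Function.onFun (IndepFun · · μ) X) := by
    intro i j hij
    exact (hindep.indepFun hij).comp hf hf
  have hid : ∀ i, IdentDistrib (X i) (X 0) μ μ := fun i => (hident i).comp hf
  -- strong law of large numbers
  set M : ℝ := ∫ ω, X 0 ω ∂μ with hMdef
  have hM0 : 0 ≤ M := integral_nonneg fun ω => Finset.sum_nonneg fun j _ => sq_nonneg _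
  have hslln : ∀ᵐ ω ∂μ, Tendsto (fun n : ℕ => (∑ i ∈ Finset.range n, X i ω) / n)
      atTop (nhds M) := strong_law_ae_real X hmom hpair hid
  -- n₂ → ∞
  have hn₂ : Tendsto n₂ atTop atTop := by
    rw [← tendsto_natCast_atTop_iff (R := ℝ)]
    apply tendsto_atTop_mono' _ (Eventually.of_forall fun n => (hcC n).1)
    exact (tendsto_natCast_atTop_iff.mpr hn₁).const_mul_atTop hc
  -- the empirical average along n₂
  set S : ℕ → Ω → ℝ := fun n ω => (∑ i ∈ Finset.range (n₂ n), X i ω) / (n₂ n) with hSdef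
  have hSae : ∀ᵐ ω ∂μ, Tendsto (fun n => S n ω) atTop (nhds M) := by
    filter_upwards [hslln] with ω hω
    exact hω.comp hn₂
  have hSmeas : ∀ n, AEStronglyMeasurable (S n) μ := by
    intro n
    exact ((Finset.measurable_sum _ fun i _ => hXmeas i).div_const _).aestronglyMeasurable
  have hTIM : TendstoInMeasure μ S atTop (fun _ => M) :=
    tendstoInMeasure_of_tendsto_ae hSmeas hSae
  have hB : Tendsto (fun n => μ {ω | M + 1 ≤ S n ω}) atTop (nhds 0) := by
    have h1 := hTIM 1 one_pos
    refine tendsto_of_tendsto_of_tendsto_of_le_of_le tendsto_const_nhds h1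
      (fun n => zero_le) (fun n => measure_mono ?_)
    intro ω hω
    simp only [Set.mem_setOf_eq] at hω ⊢
    rw [edist_dist, Real.dist_eq, ENNReal.one_le_ofReal]
    have : 1 ≤ S n ω - M := by linarith
    calc (1:ℝ) ≤ S n ω - M := this
    _ ≤ |S n ω - M| := le_abs_self _
  -- the consistency term
  have hden : 0 < Real.sqrt C * (M + 1) := by positivity
  set ε' : ℝ := ε / (Real.sqrt C * (M + 1)) with hε'def
  have hε' : 0 < ε' := div_pos hε hden
  have hA := hconsist ε' hε'
  -- eventual bound
  have hev : ∀ᶠ n in atTop, (μ {ω | ε ≤ (1 / Real.sqrt (n₂ n)) *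
      ∑ i ∈ Finset.range (n₂ n), (x i ω ⬝ᵥ (β₀ - βhat n ω)) ^ 2}).toReal ≤
      (μ {ω | M + 1 ≤ S n ω}).toReal +
      (μ {ω | ε' ≤ Real.sqrt (n₁ n) * ∑ j, (βhat n ω j - β₀ j) ^ 2}).toReal := by
    filter_upwards [hn₂.eventually_ge_atTop 1] with n hn
    have hsub : {ω | ε ≤ (1 / Real.sqrt (n₂ n)) *
        ∑ i ∈ Finset.range (n₂ n), (x i ω ⬝ᵥ (β₀ - βhat n ω)) ^ 2} ⊆
        {ω | M + 1 ≤ S n ω} ∪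
        {ω | ε' ≤ Real.sqrt (n₁ n) * ∑ j, (βhat n ω j - β₀ j) ^ 2} := by
      intro ω hω
      simp only [Set.mem_setOf_eq] at hω
      by_contra hcon
      simp only [Set.mem_union, Set.mem_setOf_eq, not_or, not_le] at hcon
      obtain ⟨hS, hT⟩ := hcon
      -- notation
      set W : ℝ := ∑ j, (β₀ j - βhat n ω j) ^ 2 with hWdef
      have hWT : W = ∑ j, (βhat n ω j - β₀ j) ^ 2 := by
        apply Finset.sum_congr rfl
        intro j _
        ring
      have hW0 : 0 ≤ W := Finset.sum_nonneg fun j _ => sq_nonneg _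
      have hS0 : 0 ≤ S n ω :=
        div_nonneg (Finset.sum_nonneg fun i _ =>
          Finset.sum_nonneg fun j _ => sq_nonneg _) (Nat.cast_nonneg _)
      have hn2pos : (0:ℝ) < (n₂ n : ℝ) := by exact_mod_cast hn
      have hsqrtpos : 0 < Real.sqrt (n₂ n) := Real.sqrt_pos.mpr hn2pos
      -- Cauchy-Schwarz termwise
      have hCS : ∀ i, (x i ω ⬝ᵥ (β₀ - βhat n ω)) ^ 2 ≤ X i ω * W := by
        intro i
        have := Finset.sum_mul_sq_le_sq_mul_sq Finset.univ (x i ω)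
          (fun j => β₀ j - βhat n ω j)
        simpa [dotProduct, Pi.sub_apply] using this
      have hsum : ∑ i ∈ Finset.range (n₂ n), (x i ω ⬝ᵥ (β₀ - βhat n ω)) ^ 2 ≤
          (∑ i ∈ Finset.range (n₂ n), X i ω) * W := by
        rw [Finset.sum_mul]
        exact Finset.sum_le_sum fun i _ => hCS i
      have hsumS : (∑ i ∈ Finset.range (n₂ n), X i ω) = (n₂ n : ℝ) * S n ω := by
        rw [hSdef]
        field_simp
      have key : (1 / Real.sqrt (n₂ n)) *
          ∑ i ∈ Finset.range (n₂ n), (x i ω ⬝ᵥ (β₀ - βhat n ω)) ^ 2 ≤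
          Real.sqrt (n₂ n) * S n ω * W := by
        rw [div_mul_eq_mul_div, one_mul, div_le_iff₀ hsqrtpos]
        calc ∑ i ∈ Finset.range (n₂ n), (x i ω ⬝ᵥ (β₀ - βhat n ω)) ^ 2
            ≤ (n₂ n : ℝ) * S n ω * W := by rw [← hsumS]; exact hsum
          _ = Real.sqrt (n₂ n) * S n ω * W * Real.sqrt (n₂ n) := by
              have h := Real.mul_self_sqrt hn2pos.le
              calc (n₂ n : ℝ) * S n ω * W
                  = (Real.sqrt (n₂ n) * Real.sqrt (n₂ n)) * S n ω * W := by rw [h]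
                _ = Real.sqrt (n₂ n) * S n ω * W * Real.sqrt (n₂ n) := by ring
      -- bound √n₂ ≤ √C √n₁
      have hsqrt : Real.sqrt (n₂ n) ≤ Real.sqrt C * Real.sqrt (n₁ n) := by
        rw [← Real.sqrt_mul hC.le]
        exact Real.sqrt_le_sqrt (hcC n).2
      have hT' : Real.sqrt (n₁ n) * W < ε' := by rw [hWT]; exact hT
      have hfin : Real.sqrt (n₂ n) * S n ω * W <
          Real.sqrt C * (M + 1) * ε' := by
        calc Real.sqrt (n₂ n) * S n ω * W
            ≤ (Real.sqrt C * Real.sqrt (n₁ n)) * S n ω * W := by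
              apply mul_le_mul_of_nonneg_right _ hW0
              exact mul_le_mul_of_nonneg_right hsqrt hS0
          _ = Real.sqrt C * (S n ω * (Real.sqrt (n₁ n) * W)) := by ring
          _ < Real.sqrt C * ((M + 1) * ε') := by
              apply mul_lt_mul_of_pos_left _ (Real.sqrt_pos.mpr hC)
              have hT0 : 0 ≤ Real.sqrt (n₁ n) * W :=
                mul_nonneg (Real.sqrt_nonneg _) hW0
              have hM1 : 0 < M + 1 := by linarith
              calc S n ω * (Real.sqrt (n₁ n) * W)
                  ≤ (M + 1) * (Real.sqrt (n₁ n) * W) :=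
                    mul_le_mul_of_nonneg_right hS.le hT0
                _ < (M + 1) * ε' := by exact mul_lt_mul_of_pos_left hT' hM1
          _ = Real.sqrt C * (M + 1) * ε' := by ring
      have : Real.sqrt C * (M + 1) * ε' = ε := by
        rw [hε'def]
        field_simp
      linarith [le_trans hω key]
    calc (μ _).toReal ≤ (μ ({ω | M + 1 ≤ S n ω} ∪
        {ω | ε' ≤ Real.sqrt (n₁ n) * ∑ j, (βhat n ω j - β₀ j) ^ 2})).toReal := by
          apply ENNReal.toReal_mono (measure_ne_top μ _) (measure_mono hsub)
      _ ≤ _ := by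
          rw [← ENNReal.toReal_add (measure_ne_top μ _) (measure_ne_top μ _)]
          exact ENNReal.toReal_mono
            (ENNReal.add_ne_top.mpr ⟨measure_ne_top μ _, measure_ne_top μ _⟩)
            (measure_union_le _ _)
  -- conclude by squeezing
  have hB' : Tendsto (fun n => (μ {ω | M + 1 ≤ S n ω}).toReal) atTop (nhds 0) := by
    have := (ENNReal.tendsto_toReal (by simp)).comp hB
    exact this
  have hsum0 : Tendsto (fun n => (μ {ω | M + 1 ≤ S n ω}).toReal +
      (μ {ω | ε' ≤ Real.sqrt (n₁ n) * ∑ j, (βhat n ω j - β₀ j) ^ 2}).toReal)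
      atTop (nhds 0) := by
    simpa using hB'.add hA
  exact squeeze_zero' (Eventually.of_forall fun n => ENNReal.toReal_nonneg) hev hsum0
end
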